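/- For every real δ with 0 < δ < 1 and all sufficiently large n, setting b = 2^⌊δn⌋ and k = ⌊δn⌋, there exists a function f : ({0,1}^n) × ({0,1}^n) → {0,1} that admits no (b, k) bit-probe scheme. -/

import Mathlib

/-- A `(b, k)` bit-probe scheme for `f : {0,1}^n × {0,1}^n → {0,1}`: an encoding
`G : {0,1}^n → {0,1}^b`, a probe map `H` assigning to each query `y` a list of `k`
positions in the encoding, and a decoder `φ`, such that for all `x, y`, `f (x, y)` equals
`φ` applied to the `k` probed bits of `G x` (at positions `H y`) and the query `y`. -/
def HasProbeScheme {n : ℕ} (b k : ℕ) (f : (Fin n → Bool) × (Fin n → Bool) → Bool) : Prop :=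
  ∃ (G : (Fin n → Bool) → (Fin b → Bool)) (H : (Fin n → Bool) → (Fin k → Fin b))
    (φ : (Fin k → Bool) → (Fin n → Bool) → Bool),
    ∀ x y : Fin n → Bool, f (x, y) = φ (fun j => G x (H y j)) y

lemma sq_le_two_pow_aux {m : ℕ} (hm : 4 ≤ m) : m * m ≤ 2 ^ m := by
  induction m, hm using Nat.le_induction with
  | base => norm_num
  | succ m hm ih =>
    have h2 : 2 * m + 1 ≤ m * m := by nlinarith
    calc (m + 1) * (m + 1) = m * m + (2 * m + 1) := by ring
      _ ≤ 2 ^ m + 2 ^ m := Nat.add_le_add ih (h2.trans ih)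
      _ = 2 ^ (m + 1) := by ring

lemma counting_aux {n m : ℕ} (hm4 : 4 ≤ m) (hmn : m + 3 ≤ n) :
    ∃ f : (Fin n → Bool) × (Fin n → Bool) → Bool, ¬ HasProbeScheme (2 ^ m) m f := by
  classical
  by_contra h
  push_neg at h
  set b := 2 ^ m with hb
  let T := ((Fin n → Bool) → (Fin b → Bool)) × ((Fin n → Bool) → (Fin m → Fin b)) ×
    ((Fin m → Bool) → (Fin n → Bool) → Bool)
  let Φ : T → ((Fin n → Bool) × (Fin n → Bool) → Bool) :=
    fun t p => t.2.2 (fun j => t.1 p.1 (t.2.1 p.2 j)) p.2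
  have hsurj : Function.Surjective Φ := by
    intro f
    obtain ⟨G, H, φ, hf⟩ := h f
    exact ⟨⟨G, H, φ⟩, by funext p; exact (hf p.1 p.2).symm⟩
  have hcard := Fintype.card_le_of_surjective Φ hsurj
  simp only [T, Fintype.card_fun, Fintype.card_prod, Fintype.card_fin, Fintype.card_bool] at hcard
  rw [hb] at hcard
  have hE : (2 ^ 2 ^ m) ^ 2 ^ n * (((2 ^ m) ^ m) ^ 2 ^ n * (2 ^ 2 ^ n) ^ 2 ^ m)
      = 2 ^ (2 ^ m * 2 ^ n + (m * m * 2 ^ n + 2 ^ n * 2 ^ m)) := by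
    rw [pow_add, ← pow_mul, ← pow_mul, ← pow_mul, ← pow_mul, pow_add]; ring_nf
  rw [hE] at hcard
  have hexp := (Nat.pow_le_pow_iff_right (by norm_num : 1 < 2)).mp hcard
  have hpos : 0 < 2 ^ n := Nat.pow_pos (by norm_num)
  have hlt : 2 ^ m * 2 ^ n + (m * m * 2 ^ n + 2 ^ n * 2 ^ m) < 2 ^ n * 2 ^ n := by
    have h1 : m * m ≤ 2 ^ m := sq_le_two_pow_aux hm4
    have h2 : 2 ^ (m + 3) ≤ 2 ^ n := Nat.pow_le_pow_right (by norm_num) hmn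
    have h3 : 2 ^ m * 8 = 2 ^ (m + 3) := by rw [pow_add]; norm_num
    have hp : 0 < 2 ^ m := Nat.pow_pos (by norm_num)
    have : 2 ^ m + (m * m + 2 ^ m) < 2 ^ n := by
      calc 2 ^ m + (m * m + 2 ^ m) ≤ 2 ^ m + (2 ^ m + 2 ^ m) := by omega
        _ < 2 ^ m * 8 := by omega
        _ = 2 ^ (m + 3) := h3
        _ ≤ 2 ^ n := h2
    calc 2 ^ m * 2 ^ n + (m * m * 2 ^ n + 2 ^ n * 2 ^ m)
        = (2 ^ m + (m * m + 2 ^ m)) * 2 ^ n := by ring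
      _ < 2 ^ n * 2 ^ n := by
          exact (Nat.mul_lt_mul_right hpos).mpr this
  exact Nat.lt_irrefl _ (lt_of_le_of_lt hexp hlt)

/-- **Existence of hard bit-probe problems.** For every real `δ` with `0 < δ < 1` and all
sufficiently large `n`, setting `b = 2^⌊δn⌋` and `k = ⌊δn⌋`, there is a function
`f : {0,1}^n × {0,1}^n → {0,1}` that admits no `(b, k)` bit-probe scheme. -/
theorem exists_hard_bit_probe_problem (δ : ℝ) (h0 : 0 < δ) (h1 : δ < 1) :
    ∃ n₀ : ℕ, ∀ n ≥ n₀, ∃ f : (Fin n → Bool) × (Fin n → Bool) → Bool,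
      ¬ HasProbeScheme (2 ^ ⌊δ * n⌋₊) ⌊δ * n⌋₊ f := by
  refine ⟨⌈4 / δ⌉₊ + ⌈3 / (1 - δ)⌉₊, fun n hn => ?_⟩
  have hδ1 : 0 < 1 - δ := by linarith
  have hn1 : (⌈4 / δ⌉₊ : ℝ) ≤ n := by exact_mod_cast Nat.cast_le.mpr (le_trans (Nat.le_add_right _ _) hn)
  have hn2 : (⌈3 / (1 - δ)⌉₊ : ℝ) ≤ n := by exact_mod_cast Nat.cast_le.mpr (le_trans (Nat.le_add_left _ _) hn)
  have h4 : 4 ≤ δ * n := by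
    have := (Nat.ceil_le.mp (le_refl ⌈4 / δ⌉₊)).trans hn1
    calc (4:ℝ) = δ * (4 / δ) := by field_simp
      _ ≤ δ * n := by
        apply mul_le_mul_of_nonneg_left _ h0.le
        exact (Nat.le_ceil _).trans hn1
  have hm4 : 4 ≤ ⌊δ * n⌋₊ := Nat.le_floor h4
  have h3 : 3 ≤ (1 - δ) * n := by
    calc (3:ℝ) = (1 - δ) * (3 / (1 - δ)) := by field_simp
      _ ≤ (1 - δ) * n := by
        apply mul_le_mul_of_nonneg_left _ hδ1.le
        exact (Nat.le_ceil _).trans hn2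
  have hmn : ⌊δ * n⌋₊ + 3 ≤ n := by
    have hfl : (⌊δ * n⌋₊ : ℝ) ≤ δ * n := Nat.floor_le (by positivity)
    have : (⌊δ * n⌋₊ : ℝ) + 3 ≤ n := by nlinarith
    exact_mod_cast this
  exact counting_aux hm4 hmn
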